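/- Under the assumptions of the previous computation, the eigenvalue ε = ∑_{μ,ν} J_{μν} m_μ m_ν of the Ising part H^Z on the configuration m, and the corresponding 'free magnon' eigenvalue δ = a·j·(N/4 − 1) + ∑_{μ : a_μ=1} J_{μμ}, satisfy ε − δ = ((1−a)/4)·N·j + α with α ≥ 0; in particular ε − δ ≥ ((1−a)/4)·N·j. -/
import Mathlib


/-- Comparison of the Ising eigenvalue ε with the free-magnon eigenvalue δ:
ε − δ = ((1−a)/4)Nj + α with α ≥ 0, hence ε − δ ≥ ((1−a)/4)Nj. -/
theorem ising_vs_free_magnon (N : ℕ) (hN : 0 < N) (J : Matrix (Fin N) (Fin N) ℝ)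
    (hsym : J.IsSymm) (hoff : ∀ μ ν, μ ≠ ν → 0 ≤ J μ ν)
    (j : ℝ) (hrow : ∀ μ, ∑ ν, J μ ν = j)
    (a : Fin N → ℝ) (ha01 : ∀ μ, a μ = 0 ∨ a μ = 1) (A : ℕ) (hA : ∑ μ, a μ = A) :
    let m : Fin N → ℝ := fun μ => 1 / 2 - a μ
    let α : ℝ := ∑ μ, ∑ ν, if μ = ν then 0 else J μ ν * a μ * a ν
    let ε : ℝ := ∑ μ, ∑ ν, J μ ν * m μ * m ν
    let δ : ℝ := A * j * (N / 4 - 1) + ∑ μ, a μ * J μ μ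
    ε - δ = ((1 - A) / 4) * N * j + α ∧ 0 ≤ α ∧ ((1 - A) / 4) * N * j ≤ ε - δ := by
  intro m α ε δ
  have hcol : ∀ ν, ∑ μ, J μ ν = j := by
    intro ν
    rw [← hrow ν]
    refine Finset.sum_congr rfl fun μ _ => ?_
    have := hsym.apply μ ν
    simpa using this.symm
  have hanneg : ∀ μ, (0:ℝ) ≤ a μ := by
    intro μ; rcases ha01 μ with h | h <;> simp [h]
  have ha2 : ∀ μ, a μ * a μ = a μ := by
    intro μ; rcases ha01 μ with h | h <;> simp [h]
  have e1 : ∑ μ : Fin N, ∑ ν, J μ ν * (1/4 : ℝ) = N * j / 4 := by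
    simp only [← Finset.sum_mul, hrow]
    simp [Finset.sum_const, Finset.card_univ]
    ring
  have e2 : ∑ μ : Fin N, ∑ ν, J μ ν * a ν * (1/2 : ℝ) = j * A / 2 := by
    rw [Finset.sum_comm]
    have h : ∀ ν : Fin N, ∑ μ, J μ ν * a ν * (1/2:ℝ) = j * (a ν / 2) := by
      intro ν
      calc ∑ μ, J μ ν * a ν * (1/2:ℝ) = (∑ μ, J μ ν) * (a ν * (1/2)) := by
            rw [Finset.sum_mul]; exact Finset.sum_congr rfl fun _ _ => by ring
        _ = j * (a ν / 2) := by rw [hcol]; ring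
    rw [Finset.sum_congr rfl fun ν _ => h ν, ← Finset.mul_sum, ← Finset.sum_div, hA]
    ring
  have e3 : ∑ μ : Fin N, ∑ ν, J μ ν * a μ * (1/2 : ℝ) = j * A / 2 := by
    have h : ∀ μ : Fin N, ∑ ν, J μ ν * a μ * (1/2:ℝ) = j * (a μ / 2) := by
      intro μ
      calc ∑ ν, J μ ν * a μ * (1/2:ℝ) = (∑ ν, J μ ν) * (a μ * (1/2)) := by
            rw [Finset.sum_mul]; exact Finset.sum_congr rfl fun _ _ => by ring
        _ = j * (a μ / 2) := by rw [hrow]; ring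
    rw [Finset.sum_congr rfl fun μ _ => h μ, ← Finset.mul_sum, ← Finset.sum_div, hA]
    ring
  have e4 : ∑ μ : Fin N, ∑ ν, J μ ν * a μ * a ν = α + ∑ μ, a μ * J μ μ := by
    have h : ∀ μ ν : Fin N, J μ ν * a μ * a ν =
        (if μ = ν then 0 else J μ ν * a μ * a ν) + (if μ = ν then a μ * J μ μ else 0) := by
      intro μ ν
      by_cases h : μ = ν
      · subst h; rw [mul_assoc, ha2]; simp [mul_comm]
      · simp [h]
    calc ∑ μ : Fin N, ∑ ν, J μ ν * a μ * a ν
        = ∑ μ : Fin N, ∑ ν, ((if μ = ν then 0 else J μ ν * a μ * a ν)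
            + (if μ = ν then a μ * J μ μ else 0)) :=
          Finset.sum_congr rfl fun μ _ => Finset.sum_congr rfl fun ν _ => h μ ν
      _ = α + ∑ μ, a μ * J μ μ := by
          simp only [Finset.sum_add_distrib]
          congr 1
          exact Finset.sum_congr rfl fun μ _ => by simp
  have hεval : ε = ∑ μ : Fin N, ∑ ν, (J μ ν * (1/4:ℝ) - J μ ν * a ν * (1/2)
      - J μ ν * a μ * (1/2) + J μ ν * a μ * a ν) := by
    refine Finset.sum_congr rfl fun μ _ => Finset.sum_congr rfl fun ν _ => ?_
    simp only [m]; ring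
  have hε : ε = N * j / 4 - j * A + (α + ∑ μ, a μ * J μ μ) := by
    rw [hεval]
    simp only [Finset.sum_add_distrib, Finset.sum_sub_distrib, e1, e2, e3, e4]
    ring
  have hαnn : (0:ℝ) ≤ α := by
    refine Finset.sum_nonneg fun μ _ => Finset.sum_nonneg fun ν _ => ?_
    by_cases h : μ = ν
    · simp [h]
    · simp only [if_neg h]
      exact mul_nonneg (mul_nonneg (hoff μ ν h) (hanneg μ)) (hanneg ν)
  have heq : ε - δ = ((1 - A) / 4) * N * j + α := by
    rw [hε]; simp only [δ]; ring
  exact ⟨heq, hαnn, by rw [heq]; linarith⟩
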